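/- arXiv:2103.14873 — 6 statements merged into one kernel-verified Lean document; each statement's English description precedes it below -/
import Mathlib

section
/- Let φ ∈ ℝ³ with φ ≠ 0 and set θ = ‖φ‖ (Euclidean norm). Then the series Γ₁(skew(φ)) = Σ_{n=0}^∞ (1/(n+1)!)·skew(φ)ⁿ converges and equals I₃ + ((1 − cos θ)/θ²)·skew(φ) + ((θ − sin θ)/θ³)·skew(φ)², where I₃ is the 3×3 identity matrix; this matrix is the left Jacobian of SO(3). -/
open Matrix

/-- The skew-symmetric matrix of a vector `ω ∈ ℝ³`, so that `skew ω *ᵥ v = ω × v`. -/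
def skew (ω : EuclideanSpace ℝ (Fin 3)) : Matrix (Fin 3) (Fin 3) ℝ :=
  !![0, -ω 2, ω 1; ω 2, 0, -ω 0; -ω 1, ω 0, 0]

lemma norm_sq_eq (φ : EuclideanSpace ℝ (Fin 3)) :
    ‖φ‖ ^ 2 = φ 0 ^ 2 + φ 1 ^ 2 + φ 2 ^ 2 := by
  rw [EuclideanSpace.norm_eq, Real.sq_sqrt (by positivity)]
  simp [Fin.sum_univ_three, Real.norm_eq_abs, sq_abs]

lemma skew_pow_three (φ : EuclideanSpace ℝ (Fin 3)) :
    skew φ ^ 3 = (-(‖φ‖ ^ 2)) • skew φ := by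
  rw [norm_sq_eq]
  ext i j
  fin_cases i <;> fin_cases j <;>
    simp [skew, pow_succ, Matrix.mul_apply, Fin.sum_univ_three] <;> ring

lemma skew_pow_odd (φ : EuclideanSpace ℝ (Fin 3)) (k : ℕ) :
    skew φ ^ (2 * k + 1) = ((-(‖φ‖ ^ 2)) ^ k) • skew φ := by
  induction k with
  | zero => simp
  | succ n ih =>
      have : 2 * (n + 1) + 1 = (2 * n + 1) + 2 := by ring
      rw [this, pow_add, ih, smul_mul_assoc, ← pow_succ' (skew φ),
        show (2:ℕ) + 1 = 3 from rfl, skew_pow_three, smul_smul, ← pow_succ]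

lemma skew_pow_even (φ : EuclideanSpace ℝ (Fin 3)) (k : ℕ) :
    skew φ ^ (2 * k + 2) = ((-(‖φ‖ ^ 2)) ^ k) • (skew φ * skew φ) := by
  rw [show 2 * k + 2 = (2 * k + 1) + 1 by ring, pow_succ, skew_pow_odd, smul_mul_assoc]

lemma hs_cos (θ : ℝ) (hθ : θ ≠ 0) :
    HasSum (fun k : ℕ => (-(θ ^ 2)) ^ k / ((2 * k + 2).factorial : ℝ))
      ((1 - Real.cos θ) / θ ^ 2) := by
  have h0 := Real.hasSum_cos θ
  have h1 : HasSum (fun n : ℕ => (-1 : ℝ) ^ (n + 1) * θ ^ (2 * (n + 1)) / ((2 * (n + 1)).factorial : ℝ))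
      (Real.cos θ - 1) := by
    apply (hasSum_nat_add_iff (f := fun n : ℕ => (-1 : ℝ) ^ n * θ ^ (2 * n) / ((2 * n).factorial : ℝ)) 1).mpr
    simpa using h0
  have h2 := (h1.neg).div_const (θ ^ 2)
  convert h2 using 2 with k
  · rfl
  · rw [show 2 * (k + 1) = 2 * k + 2 by ring]
    have : (-(θ ^ 2)) ^ k = (-1 : ℝ) ^ k * θ ^ (2 * k) := by
      rw [neg_pow, ← pow_mul]
    field_simp [this]
    ring
  · ring

lemma hs_sin (θ : ℝ) (hθ : θ ≠ 0) :
    HasSum (fun k : ℕ => (-(θ ^ 2)) ^ k / ((2 * k + 3).factorial : ℝ))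
      ((θ - Real.sin θ) / θ ^ 3) := by
  have h0 := Real.hasSum_sin θ
  have h1 : HasSum (fun n : ℕ => (-1 : ℝ) ^ (n + 1) * θ ^ (2 * (n + 1) + 1) / ((2 * (n + 1) + 1).factorial : ℝ))
      (Real.sin θ - θ) := by
    apply (hasSum_nat_add_iff (f := fun n : ℕ => (-1 : ℝ) ^ n * θ ^ (2 * n + 1) / ((2 * n + 1).factorial : ℝ)) 1).mpr
    simpa using h0
  have h2 := (h1.neg).div_const (θ ^ 3)
  convert h2 using 2 with k
  · rfl
  · rw [show 2 * (k + 1) + 1 = 2 * k + 3 by ring]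
    have : (-(θ ^ 2)) ^ k = (-1 : ℝ) ^ k * θ ^ (2 * k) := by
      rw [neg_pow, ← pow_mul]
    field_simp [this]
    ring
  · ring

/-- The series `Γ₁(skew φ) = Σ_{n=0}^∞ skew(φ)ⁿ/(n+1)!` converges to the left Jacobian
of `SO(3)`: `I + ((1 − cos θ)/θ²)·skew φ + ((θ − sin θ)/θ³)·skew(φ)²` with `θ = ‖φ‖`. -/
theorem gamma_one_skew (φ : EuclideanSpace ℝ (Fin 3)) (hφ : φ ≠ 0) :
    HasSum (fun n : ℕ => (((n + 1).factorial : ℝ))⁻¹ • skew φ ^ n)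
      (1 + ((1 - Real.cos ‖φ‖) / ‖φ‖ ^ 2) • skew φ
        + ((‖φ‖ - Real.sin ‖φ‖) / ‖φ‖ ^ 3) • (skew φ * skew φ)) := by
  have hθ : ‖φ‖ ≠ 0 := norm_ne_zero_iff.mpr hφ
  set t : ℕ → Matrix (Fin 3) (Fin 3) ℝ := fun n => (((n + 1).factorial : ℝ))⁻¹ • skew φ ^ n with ht
  have hA : HasSum (fun k : ℕ => t (2 * k + 1)) (((1 - Real.cos ‖φ‖) / ‖φ‖ ^ 2) • skew φ) := by
    have := (hs_cos ‖φ‖ hθ).smul_const (skew φ)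
    convert this using 2 with k
    simp only [ht, skew_pow_odd, smul_smul, div_eq_mul_inv]
    rw [show 2 * k + 1 + 1 = 2 * k + 2 by ring, mul_comm]
  have hB : HasSum (fun k : ℕ => t (2 * k + 2)) (((‖φ‖ - Real.sin ‖φ‖) / ‖φ‖ ^ 3) • (skew φ * skew φ)) := by
    have := (hs_sin ‖φ‖ hθ).smul_const (skew φ * skew φ)
    convert this using 2 with k
    simp only [ht, skew_pow_even, smul_smul, div_eq_mul_inv]
    rw [show 2 * k + 2 + 1 = 2 * k + 3 by ring, mul_comm]
  have hshift : HasSum (fun n : ℕ => t (n + 1))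
      (((1 - Real.cos ‖φ‖) / ‖φ‖ ^ 2) • skew φ
        + ((‖φ‖ - Real.sin ‖φ‖) / ‖φ‖ ^ 3) • (skew φ * skew φ)) := by
    refine HasSum.even_add_odd ?_ ?_
    · convert hA using 2 with k
    · convert hB using 2 with k
  have := (hasSum_nat_add_iff (f := t) 1).mp hshift
  simp only [Finset.range_one, Finset.sum_singleton, ht] at this
  norm_num at this
  convert this using 1
  · rfl
  abel
end

section
/- Let φ ∈ ℝ³ with φ ≠ 0 and set θ = ‖φ‖ (Euclidean norm). Then the series Γ₂(skew(φ)) = Σ_{n=0}^∞ (1/(n+2)!)·skew(φ)ⁿ converges and equals (1/2)·I₃ + ((θ − sin θ)/θ³)·skew(φ) + ((θ² + 2cos θ − 2)/(2θ⁴))·skew(φ)², where I₃ is the 3×3 identity matrix. -/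
open Matrix

/-- The series `Γ₂(skew φ) = Σ_{n=0}^∞ skew(φ)ⁿ/(n+2)!` converges to
`(1/2)·I + ((θ − sin θ)/θ³)·skew φ + ((θ² + 2 cos θ − 2)/(2θ⁴))·skew(φ)²` with `θ = ‖φ‖`. -/
theorem gamma_two_skew (φ : EuclideanSpace ℝ (Fin 3)) (hφ : φ ≠ 0) :
    HasSum (fun n : ℕ => (((n + 2).factorial : ℝ))⁻¹ • skew φ ^ n)
      ((1 / 2 : ℝ) • (1 : Matrix (Fin 3) (Fin 3) ℝ)
        + ((‖φ‖ - Real.sin ‖φ‖) / ‖φ‖ ^ 3) • skew φ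
        + ((‖φ‖ ^ 2 + 2 * Real.cos ‖φ‖ - 2) / (2 * ‖φ‖ ^ 4)) • (skew φ * skew φ)) := by
  set A := skew φ with hA
  set θ := ‖φ‖ with hθdef
  have hθ : θ ≠ 0 := norm_ne_zero_iff.mpr hφ
  -- cube identity
  have hA3 : A * A * A = (-θ ^ 2) • A := by
    have hnorm : θ ^ 2 = φ 0 ^ 2 + φ 1 ^ 2 + φ 2 ^ 2 := by
      rw [hθdef, ← real_inner_self_eq_norm_sq, PiLp.inner_apply, Fin.sum_univ_three]
      simp [RCLike.inner_apply, sq]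
    rw [hnorm]
    ext i j
    fin_cases i <;> fin_cases j <;>
      simp [hA, skew, Matrix.mul_apply, Fin.sum_univ_succ] <;> ring
  -- power formulas
  have hAA : A * A ^ 2 = (-θ ^ 2) • A := by rw [pow_two, ← mul_assoc, hA3]
  have hodd : ∀ k : ℕ, A ^ (2 * k + 1) = ((-θ ^ 2) ^ k) • A := by
    intro k
    induction k with
    | zero => simp
    | succ k ih =>
      have e : 2 * (k + 1) + 1 = (2 * k + 1) + 2 := by ring
      rw [e, pow_add, ih, smul_mul_assoc, hAA, smul_smul, ← pow_succ]
  have heven : ∀ k : ℕ, A ^ (2 * k + 2) = ((-θ ^ 2) ^ k) • (A * A) := by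
    intro k
    have e : 2 * k + 2 = (2 * k + 1) + 1 := rfl
    rw [e, pow_succ, hodd, smul_mul_assoc]
  -- scalar series
  have s1 : HasSum (fun k : ℕ => (((2 * k + 3).factorial : ℝ))⁻¹ * (-θ ^ 2) ^ k)
      ((θ - Real.sin θ) / θ ^ 3) := by
    have h : HasSum (fun n : ℕ =>
        (-1 : ℝ) ^ (n + 1) * θ ^ (2 * (n + 1) + 1) / (2 * (n + 1) + 1).factorial)
        (Real.sin θ - θ) := by
      rw [hasSum_nat_add_iff (f := fun n : ℕ =>
        (-1 : ℝ) ^ n * θ ^ (2 * n + 1) / (2 * n + 1).factorial) 1]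
      convert Real.hasSum_sin θ using 1
      · rfl
      simp [Finset.sum_range_one]
    have h' := h.neg.div_const (θ ^ 3)
    rw [neg_sub] at h'
    convert h' using 1
    · rfl
    funext k
    have e : 2 * (k + 1) + 1 = 2 * k + 3 := by ring
    rw [e, neg_pow, ← pow_mul]
    field_simp
    ring
  have s2 : HasSum (fun k : ℕ => (((2 * k + 4).factorial : ℝ))⁻¹ * (-θ ^ 2) ^ k)
      ((θ ^ 2 + 2 * Real.cos θ - 2) / (2 * θ ^ 4)) := by
    have h : HasSum (fun n : ℕ =>
        (-1 : ℝ) ^ (n + 2) * θ ^ (2 * (n + 2)) / (2 * (n + 2)).factorial)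
        (Real.cos θ - (1 - θ ^ 2 / 2)) := by
      rw [hasSum_nat_add_iff (f := fun n : ℕ =>
        (-1 : ℝ) ^ n * θ ^ (2 * n) / (2 * n).factorial) 2]
      convert Real.hasSum_cos θ using 1
      · rfl
      simp [Finset.sum_range_succ, Nat.factorial]
      ring
    have h' := h.div_const (θ ^ 4)
    convert h' using 1
    · rfl
    · funext k
      have e : 2 * (k + 2) = 2 * k + 4 := by ring
      rw [e, neg_pow, ← pow_mul]
      field_simp
      ring
    · field_simp
      ring
  -- assemble
  set f : ℕ → Matrix (Fin 3) (Fin 3) ℝ := fun n => (((n + 2).factorial : ℝ))⁻¹ • A ^ n with hf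
  have hodd' : HasSum (fun k : ℕ => f (2 * k + 1)) (((θ - Real.sin θ) / θ ^ 3) • A) := by
    have h := s1.smul_const A
    convert h using 1
    funext k
    show (((2 * k + 1 + 2).factorial : ℝ))⁻¹ • A ^ (2 * k + 1) = _
    rw [hodd k, smul_smul]
  have heven' : HasSum (fun k : ℕ => f (2 * k + 1 + 1))
      (((θ ^ 2 + 2 * Real.cos θ - 2) / (2 * θ ^ 4)) • (A * A)) := by
    have h := s2.smul_const (A * A)
    convert h using 1
    funext k
    show (((2 * k + 2 + 2).factorial : ℝ))⁻¹ • A ^ (2 * k + 2) = _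
    rw [heven k, smul_smul]
  have hshift : HasSum (fun n : ℕ => f (n + 1))
      (((θ - Real.sin θ) / θ ^ 3) • A
        + ((θ ^ 2 + 2 * Real.cos θ - 2) / (2 * θ ^ 4)) • (A * A)) :=
    HasSum.even_add_odd hodd' heven'
  have hmain := (hasSum_nat_add_iff (f := f) 1).mp hshift
  have hf0 : f 0 = (1 / 2 : ℝ) • (1 : Matrix (Fin 3) (Fin 3) ℝ) := by
    show (((0 + 2).factorial : ℝ))⁻¹ • A ^ 0 = _
    norm_num
  rw [Finset.sum_range_one, hf0] at hmain
  convert hmain using 1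
  · rfl
  abel
end

section
/- Let φ ∈ ℝ³ with φ ≠ 0 and set θ = ‖φ‖ (Euclidean norm). Then the series Γ₃(skew(φ)) = Σ_{n=0}^∞ (1/(n+3)!)·skew(φ)ⁿ converges and equals (1/6)·I₃ + ((θ² + 2cos θ − 2)/(2θ⁴))·skew(φ) + ((θ³ − 6θ + 6 sin θ)/(6θ⁵))·skew(φ)², where I₃ is the 3×3 identity matrix. -/
open Matrix

/-- The series `Γ₃(skew φ) = Σ_{n=0}^∞ skew(φ)ⁿ/(n+3)!` converges to
`(1/6)·I + ((θ² + 2 cos θ − 2)/(2θ⁴))·skew φ + ((θ³ − 6θ + 6 sin θ)/(6θ⁵))·skew(φ)²`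
with `θ = ‖φ‖`. -/
theorem gamma_three_skew (φ : EuclideanSpace ℝ (Fin 3)) (hφ : φ ≠ 0) :
    HasSum (fun n : ℕ => (((n + 3).factorial : ℝ))⁻¹ • skew φ ^ n)
      ((1 / 6 : ℝ) • (1 : Matrix (Fin 3) (Fin 3) ℝ)
        + ((‖φ‖ ^ 2 + 2 * Real.cos ‖φ‖ - 2) / (2 * ‖φ‖ ^ 4)) • skew φ
        + ((‖φ‖ ^ 3 - 6 * ‖φ‖ + 6 * Real.sin ‖φ‖) / (6 * ‖φ‖ ^ 5)) • (skew φ * skew φ)) := by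
  set A := skew φ with hA
  set θ := ‖φ‖ with hθdef
  have hθ : θ ≠ 0 := norm_ne_zero_iff.mpr hφ
  have hnorm : θ ^ 2 = φ 0 ^ 2 + φ 1 ^ 2 + φ 2 ^ 2 := by
    rw [hθdef, EuclideanSpace.norm_eq, Real.sq_sqrt (by positivity)]
    simp [Fin.sum_univ_three]
  have hA3 : A * A * A = (-θ ^ 2) • A := by
    rw [hnorm, hA]
    ext i j
    fin_cases i <;> fin_cases j <;> simp [skew, Matrix.mul_apply, Fin.sum_univ_three] <;> ring
  have hodd : ∀ k : ℕ, A ^ (2 * k + 1) = ((-θ ^ 2) ^ k) • A := by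
    intro k
    induction k with
    | zero => simp
    | succ k ih =>
      have h : A ^ (2 * (k + 1) + 1) = A ^ (2 * k + 1) * A * A := by
        rw [show 2 * (k + 1) + 1 = (2 * k + 1) + 1 + 1 from by ring, pow_succ, pow_succ]
      rw [h, ih, smul_mul_assoc, smul_mul_assoc, hA3, smul_smul, ← pow_succ]
  have heven : ∀ k : ℕ, A ^ (2 * k + 2) = ((-θ ^ 2) ^ k) • (A * A) := by
    intro k
    rw [show 2 * k + 2 = (2 * k + 1) + 1 from by ring, pow_succ, hodd, smul_mul_assoc]
  set t0 : ℕ → ℝ := fun n => if n = 0 then (1/6 : ℝ) else 0 with ht0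
  set t1 : ℕ → ℝ := fun n => if n % 2 = 1 then (((n + 3).factorial : ℝ))⁻¹ * (-θ ^ 2) ^ (n / 2) else 0 with ht1
  set t2 : ℕ → ℝ := fun n => if n % 2 = 0 ∧ n ≠ 0 then (((n + 3).factorial : ℝ))⁻¹ * (-θ ^ 2) ^ (n / 2 - 1) else 0 with ht2
  have hs0 : HasSum t0 (1/6 : ℝ) := hasSum_ite_eq 0 (1/6 : ℝ)
  have hs1 : HasSum t1 ((θ ^ 2 + 2 * Real.cos θ - 2) / (2 * θ ^ 4)) := by
    have hinj : Function.Injective (fun k : ℕ => 2 * k + 1) := by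
      intro a b h; simp only [] at h; omega
    have hsupp : ∀ x ∉ Set.range (fun k : ℕ => 2 * k + 1), t1 x = 0 := by
      intro x hx
      have hx2 : x % 2 ≠ 1 := by
        intro h
        exact hx ⟨x / 2, show 2 * (x / 2) + 1 = x by omega⟩
      simp [ht1, hx2]
    rw [← Function.Injective.hasSum_iff hinj hsupp]
    have h2 : HasSum (fun n : ℕ => (-1 : ℝ) ^ (n + 2) * θ ^ (2 * (n + 2)) / ((2 * (n + 2)).factorial : ℝ))
        (Real.cos θ - ∑ i ∈ Finset.range 2, (-1 : ℝ) ^ i * θ ^ (2 * i) / ((2 * i).factorial : ℝ)) :=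
      (hasSum_nat_add_iff' 2).mpr (Real.hasSum_cos θ)
    have h3 := h2.mul_right (θ ^ 4)⁻¹
    convert h3 using 1
    · rfl
    · funext k
      simp only [Function.comp, ht1]
      have hm : (2 * k + 1) % 2 = 1 := by omega
      have hd : (2 * k + 1) / 2 = k := by omega
      rw [if_pos hm, hd, show 2 * k + 1 + 3 = 2 * (k + 2) from by ring]
      have hfac : (((2 * (k + 2)).factorial : ℝ)) ≠ 0 := by positivity
      field_simp
      ring
    · rw [show ∑ i ∈ Finset.range 2, (-1 : ℝ) ^ i * θ ^ (2 * i) / ((2 * i).factorial : ℝ)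
          = 1 - θ ^ 2 / 2 from by norm_num [Finset.sum_range_succ, Nat.factorial]; ring]
      field_simp
      ring
  have hs2 : HasSum t2 ((θ ^ 3 - 6 * θ + 6 * Real.sin θ) / (6 * θ ^ 5)) := by
    have hinj : Function.Injective (fun k : ℕ => 2 * k + 2) := by
      intro a b h; simp only [] at h; omega
    have hsupp : ∀ x ∉ Set.range (fun k : ℕ => 2 * k + 2), t2 x = 0 := by
      intro x hx
      have hx2 : ¬(x % 2 = 0 ∧ x ≠ 0) := by
        rintro ⟨h1, h2⟩
        exact hx ⟨x / 2 - 1, show 2 * (x / 2 - 1) + 2 = x by omega⟩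
      simp only [ht2, hx2, if_false]
    rw [← Function.Injective.hasSum_iff hinj hsupp]
    have h2 : HasSum (fun n : ℕ => (-1 : ℝ) ^ (n + 2) * θ ^ (2 * (n + 2) + 1) / ((2 * (n + 2) + 1).factorial : ℝ))
        (Real.sin θ - ∑ i ∈ Finset.range 2, (-1 : ℝ) ^ i * θ ^ (2 * i + 1) / ((2 * i + 1).factorial : ℝ)) :=
      (hasSum_nat_add_iff' 2).mpr (Real.hasSum_sin θ)
    have h3 := h2.mul_right (θ ^ 5)⁻¹
    convert h3 using 1
    · rfl
    · funext k
      simp only [Function.comp, ht2]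
      have hm : (2 * k + 2) % 2 = 0 := by omega
      have hd : (2 * k + 2) / 2 - 1 = k := by omega
      rw [if_pos ⟨hm, by omega⟩, hd, show 2 * k + 2 + 3 = 2 * (k + 2) + 1 from by ring]
      have hfac : (((2 * (k + 2) + 1).factorial : ℝ)) ≠ 0 := by positivity
      field_simp
      ring
    · rw [show ∑ i ∈ Finset.range 2, (-1 : ℝ) ^ i * θ ^ (2 * i + 1) / ((2 * i + 1).factorial : ℝ)
          = θ - θ ^ 3 / 6 from by norm_num [Finset.sum_range_succ, Nat.factorial]; ring]
      field_simp
      ring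
  have hsum := ((hs0.smul_const (1 : Matrix (Fin 3) (Fin 3) ℝ)).add (hs1.smul_const A)).add
    (hs2.smul_const (A * A))
  convert hsum using 1
  funext n
  rcases Nat.eq_zero_or_pos n with h0 | hpos
  · subst h0
    simp [ht0, ht1, ht2]
    norm_num [Nat.factorial]
  rcases Nat.even_or_odd n with ⟨k, hk⟩ | ⟨k, hk⟩
  · obtain ⟨m, hm⟩ : ∃ m, k = m + 1 := ⟨k - 1, by omega⟩
    have hn : n = 2 * m + 2 := by omega
    subst hn
    rw [heven m]
    have h1 : (2 * m + 2) % 2 = 0 := by omega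
    have h2 : (2 * m + 2) / 2 - 1 = m := by omega
    simp only [ht0, ht1, ht2]
    rw [if_neg (by omega), if_neg (by omega), if_pos ⟨h1, by omega⟩, h2]
    rw [smul_smul]
    simp
  · have hn : n = 2 * k + 1 := by omega
    subst hn
    rw [hodd k]
    have h1 : (2 * k + 1) % 2 = 1 := by omega
    have h2 : (2 * k + 1) / 2 = k := by omega
    simp only [ht0, ht1, ht2]
    rw [if_neg (by omega), if_pos h1, h2, if_neg (by simp [h1])]
    rw [smul_smul]
    simp
end

section
/- Let n be a positive integer, K an n×n real matrix, and Δ > 0. Then ∫₀^Δ Γ₁(t·K)·t dt = Γ₂(Δ·K)·Δ², where the integral is taken entrywise. Equivalently, the iterated integral ∫₀^Δ ∫₀^{t₂} exp(t₁·K) dt₁ dt₂ equals Γ₂(Δ·K)·Δ². -/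
open Matrix MeasureTheory

/-- `Γ_m(A) = Σ_{n=0}^∞ Aⁿ/(n+m)!`. -/
noncomputable def Gamma {d : ℕ} (m : ℕ) (A : Matrix (Fin d) (Fin d) ℝ) :
    Matrix (Fin d) (Fin d) ℝ :=
  ∑' n : ℕ, (((n + m).factorial : ℝ))⁻¹ • A ^ n

namespace GammaAux

variable {d : ℕ} (K : Matrix (Fin d) (Fin d) ℝ)

noncomputable def C : ℝ := (∑ i, ∑ j, |K i j|) + 1

lemma sum_abs_nonneg : (0:ℝ) ≤ ∑ i, ∑ j, |K i j| := by positivity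

lemma one_le_C : 1 ≤ C K := by
  have := sum_abs_nonneg K
  simp only [C]; linarith

lemma C_nonneg : 0 ≤ C K := le_trans zero_le_one (one_le_C K)

lemma row_sum_le (i : Fin d) : ∑ k, |K i k| ≤ C K := by
  have h1 : ∑ k, |K i k| ≤ ∑ i, ∑ j, |K i j| := by
    apply Finset.single_le_sum (f := fun i => ∑ j, |K i j|)
    · intro i _; positivity
    · exact Finset.mem_univ i
  have := sum_abs_nonneg K
  simp only [C]; linarith

lemma entry_bound : ∀ n (i j : Fin d), |(K ^ n) i j| ≤ C K ^ n := by
  intro n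
  induction n with
  | zero =>
    intro i j
    simp only [pow_zero, Matrix.one_apply]
    split <;> simp
  | succ n ih =>
    intro i j
    rw [pow_succ']
    have hC := C_nonneg K
    calc |(K * K ^ n) i j| = |∑ k, K i k * (K ^ n) k j| := by rw [Matrix.mul_apply]
      _ ≤ ∑ k, |K i k * (K ^ n) k j| := Finset.abs_sum_le_sum_abs _ _
      _ ≤ ∑ k, |K i k| * C K ^ n := by
          apply Finset.sum_le_sum
          intro k _
          rw [abs_mul]
          exact mul_le_mul_of_nonneg_left (ih k j) (abs_nonneg _)
      _ = (∑ k, |K i k|) * C K ^ n := by rw [Finset.sum_mul]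
      _ ≤ C K ^ (n + 1) := by
          rw [pow_succ']
          exact mul_le_mul_of_nonneg_right (row_sum_le K i) (pow_nonneg hC n)

/-- the `(i,j)` entry series of `t^m Γ_m(tK)`. -/
noncomputable def F (i j : Fin d) (m : ℕ) (t : ℝ) : ℝ :=
  ∑' n : ℕ, (((n + m).factorial : ℝ))⁻¹ * t ^ (n + m) * (K ^ n) i j

lemma summable_aux (m : ℕ) (t : ℝ) (R : ℝ) (hR : ∀ n, |(K ^ n) i j| ≤ R ^ n)
    (hR0 : 0 ≤ R) :
    Summable (fun n : ℕ => (((n + m).factorial : ℝ))⁻¹ * t ^ (n + m) * (K ^ n) i j) := by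
  apply Summable.of_norm_bounded (g := fun n => |t| ^ m * ((|t| * R) ^ n / n.factorial))
  · exact (Real.summable_pow_div_factorial (|t| * R)).mul_left _
  · intro n
    have h1 : ((n + m).factorial : ℝ)⁻¹ ≤ (n.factorial : ℝ)⁻¹ := by
      apply inv_anti₀
      · exact_mod_cast n.factorial_pos
      · exact_mod_cast Nat.factorial_le (Nat.le_add_right n m)
    calc ‖(((n + m).factorial : ℝ))⁻¹ * t ^ (n + m) * (K ^ n) i j‖
        = ((n + m).factorial : ℝ)⁻¹ * |t| ^ (n + m) * |(K ^ n) i j| := by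
          simp [abs_mul, abs_pow, Nat.factorial]
      _ ≤ (n.factorial : ℝ)⁻¹ * (|t| ^ (n + m)) * R ^ n := by
          apply mul_le_mul
          · apply mul_le_mul_of_nonneg_right h1 (by positivity)
          · exact hR n
          · exact abs_nonneg _
          · positivity
      _ = |t| ^ m * ((|t| * R) ^ n / n.factorial) := by
          rw [pow_add, mul_pow]
          field_simp

lemma summable_entry (m : ℕ) (t : ℝ) (i j : Fin d) :
    Summable (fun n : ℕ => (((n + m).factorial : ℝ))⁻¹ * t ^ (n + m) * (K ^ n) i j) :=
  summable_aux K m t (C K) (fun n => entry_bound K n i j) (C_nonneg K)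

lemma summable_matrix (m : ℕ) (A : Matrix (Fin d) (Fin d) ℝ) :
    Summable (fun n : ℕ => (((n + m).factorial : ℝ))⁻¹ • A ^ n) := by
  apply Pi.summable.mpr
  intro i
  rw [Pi.summable]
  intro j
  have h := summable_aux A m 1 (C A) (fun n => entry_bound A n i j) (C_nonneg A)
  simpa using (summable_aux A m 1 (C A) (fun n => entry_bound A n i j) (C_nonneg A))

lemma gamma_entry (m : ℕ) (t : ℝ) (i j : Fin d) :
    (t ^ m • Gamma m (t • K)) i j = F K i j m t := by
  have hs : Summable (fun n : ℕ => (((n + m).factorial : ℝ))⁻¹ • (t • K) ^ n) :=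
    summable_matrix m (t • K)
  have hsi : Summable (fun n : ℕ => ((((n + m).factorial : ℝ))⁻¹ • (t • K) ^ n) i) :=
    (Pi.summable).mp hs i
  have : (Gamma m (t • K)) i j
      = ∑' n : ℕ, ((((n + m).factorial : ℝ))⁻¹ • (t • K) ^ n) i j := by
    rw [Gamma]
    exact (congrFun (tsum_apply (x := i) hs) j).trans (tsum_apply hsi)
  simp only [Matrix.smul_apply, smul_eq_mul, this, F]
  rw [← tsum_mul_left]
  congr 1
  funext n
  rw [smul_pow]
  simp only [Matrix.smul_apply, smul_eq_mul]
  rw [pow_add]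
  ring

lemma exp_entry (t : ℝ) (i j : Fin d) :
    NormedSpace.exp (t • K) i j = F K i j 0 t := by
  have h := gamma_entry K 0 t i j
  simp only [pow_zero, one_smul] at h
  rw [← h, NormedSpace.exp_eq_tsum (𝕂 := ℝ), Gamma]
  norm_num

/-- Key integration step: `∫₀^Δ F m t dt = F (m+1) Δ` for `0 ≤ Δ`. -/
lemma integral_F (m : ℕ) (Δ : ℝ) (hΔ : 0 ≤ Δ) (i j : Fin d) :
    ∫ t in (0:ℝ)..Δ, F K i j m t = F K i j (m + 1) Δ := by
  rw [intervalIntegral.integral_of_le hΔ]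
  have hmeas : ∀ n : ℕ, Integrable
      (fun t => (((n + m).factorial : ℝ))⁻¹ * t ^ (n + m) * (K ^ n) i j)
      (volume.restrict (Set.Ioc (0:ℝ) Δ)) := by
    intro n
    apply Continuous.integrableOn_Ioc
    continuity
  have hint : ∀ n : ℕ, (∫ t in Set.Ioc (0:ℝ) Δ,
      (((n + m).factorial : ℝ))⁻¹ * t ^ (n + m) * (K ^ n) i j)
      = (((n + m + 1).factorial : ℝ))⁻¹ * Δ ^ (n + m + 1) * (K ^ n) i j := by
    intro n
    rw [← intervalIntegral.integral_of_le hΔ]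
    rw [intervalIntegral.integral_mul_const, intervalIntegral.integral_const_mul,
      integral_pow]
    rw [Nat.factorial_succ]
    push_cast
    rw [mul_inv]
    ring
  have hsum : Summable (fun n : ℕ => ∫ t in Set.Ioc (0:ℝ) Δ,
      ‖(((n + m).factorial : ℝ))⁻¹ * t ^ (n + m) * (K ^ n) i j‖) := by
    apply Summable.of_nonneg_of_le
    · intro n; positivity
    · intro n
      show (∫ t in Set.Ioc (0:ℝ) Δ,
          ‖(((n + m).factorial : ℝ))⁻¹ * t ^ (n + m) * (K ^ n) i j‖)
          ≤ Δ * (Δ ^ m * ((Δ * C K) ^ n / n.factorial))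
      calc (∫ t in Set.Ioc (0:ℝ) Δ,
          ‖(((n + m).factorial : ℝ))⁻¹ * t ^ (n + m) * (K ^ n) i j‖)
          ≤ (∫ _t in Set.Ioc (0:ℝ) Δ, Δ ^ m * ((Δ * C K) ^ n / n.factorial)) := by
            apply setIntegral_mono_on
            · exact (hmeas n).norm
            · exact integrable_const _
            · exact measurableSet_Ioc
            · intro t ht
              have ht0 : 0 ≤ t := le_of_lt ht.1
              have htΔ : t ≤ Δ := ht.2
              have h1 : ((n + m).factorial : ℝ)⁻¹ ≤ (n.factorial : ℝ)⁻¹ := by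
                apply inv_anti₀
                · exact_mod_cast n.factorial_pos
                · exact_mod_cast Nat.factorial_le (Nat.le_add_right n m)
              have hb := entry_bound K n i j
              calc ‖(((n + m).factorial : ℝ))⁻¹ * t ^ (n + m) * (K ^ n) i j‖
                  = ((n + m).factorial : ℝ)⁻¹ * t ^ (n + m) * |(K ^ n) i j| := by
                    rw [Real.norm_eq_abs, abs_mul, abs_mul]
                    congr 2
                    · simp
                    · rw [abs_pow, abs_of_nonneg ht0]
                _ ≤ (n.factorial : ℝ)⁻¹ * Δ ^ (n + m) * C K ^ n := by
                    apply mul_le_mul _ hb (abs_nonneg _) (by positivity)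
                    exact mul_le_mul h1 (pow_le_pow_left₀ ht0 htΔ _) (by positivity)
                      (by positivity)
                _ = Δ ^ m * ((Δ * C K) ^ n / n.factorial) := by
                    rw [pow_add, mul_pow]
                    field_simp
        _ ≤ Δ * (Δ ^ m * ((Δ * C K) ^ n / n.factorial)) := by
            rw [setIntegral_const]
            rw [Real.volume_real_Ioc_of_le hΔ]
            rw [smul_eq_mul, sub_zero]
    · exact ((Real.summable_pow_div_factorial (Δ * C K)).mul_left _).mul_left _
  have := MeasureTheory.integral_tsum_of_summable_integral_norm hmeas hsum
  simp only [F]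
  rw [← this]
  apply tsum_congr
  intro n
  rw [hint n]
  norm_num [show n + (m + 1) = n + m + 1 from rfl]

end GammaAux

/-- `∫₀^Δ Γ₁(t K) t dt = Γ₂(Δ K) Δ²` (entrywise integral); equivalently the iterated
integral `∫₀^Δ ∫₀^{t₂} exp(t₁ K) dt₁ dt₂ = Γ₂(Δ K) Δ²`. -/
theorem integral_gamma_one_eq_gamma_two {d : ℕ} (hd : 0 < d)
    (K : Matrix (Fin d) (Fin d) ℝ) (Δ : ℝ) (hΔ : 0 < Δ) :
    (∀ i j : Fin d,
      (∫ t in (0 : ℝ)..Δ, (t • Gamma 1 (t • K)) i j)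
        = ((Δ ^ 2) • Gamma 2 (Δ • K)) i j) ∧
    (∀ i j : Fin d,
      (∫ t₂ in (0 : ℝ)..Δ, ∫ t₁ in (0 : ℝ)..t₂, NormedSpace.exp (t₁ • K) i j)
        = ((Δ ^ 2) • Gamma 2 (Δ • K)) i j) := by
  have hΔ0 : (0:ℝ) ≤ Δ := le_of_lt hΔ
  constructor
  · intro i j
    have h1 : ∀ t : ℝ, (t • Gamma 1 (t • K)) i j = GammaAux.F K i j 1 t := by
      intro t
      have := GammaAux.gamma_entry K 1 t i j
      simpa using this
    have h2 := GammaAux.gamma_entry K 2 Δ i j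
    simp only [h1]
    rw [GammaAux.integral_F K 1 Δ hΔ0 i j, ← h2]
  · intro i j
    have h2 := GammaAux.gamma_entry K 2 Δ i j
    have hcongr : ∫ t₂ in (0 : ℝ)..Δ, (∫ t₁ in (0 : ℝ)..t₂,
        NormedSpace.exp (t₁ • K) i j) = ∫ t₂ in (0 : ℝ)..Δ, GammaAux.F K i j 1 t₂ := by
      apply intervalIntegral.integral_congr
      intro t₂ ht₂
      rw [Set.uIcc_of_le hΔ0] at ht₂
      have h0 : (0:ℝ) ≤ t₂ := ht₂.1
      have : ∀ t₁ : ℝ, NormedSpace.exp (t₁ • K) i j = GammaAux.F K i j 0 t₁ :=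
        fun t₁ => GammaAux.exp_entry K t₁ i j
      simp only [this]
      exact GammaAux.integral_F K 0 t₂ h0 i j
    rw [hcongr, GammaAux.integral_F K 1 Δ hΔ0 i j, ← h2]
end

section
/- Let n be a positive integer, K an n×n real matrix, and Δ > 0. Then ∫₀^Δ Γ₂(t·K)·t² dt = Γ₃(Δ·K)·Δ³, where the integral is taken entrywise. Equivalently, the iterated integral ∫₀^Δ ∫₀^{t₃} ∫₀^{t₂} exp(t₁·K) dt₁ dt₂ dt₃ equals Γ₃(Δ·K)·Δ³. -/
open Matrix

open MeasureTheory

variable {d : ℕ}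


/-- Entry bound for powers. -/
lemma abs_entry_pow_le (K : Matrix (Fin d) (Fin d) ℝ) (n : ℕ) (i j : Fin d) :
    |(K ^ n) i j| ≤ (∑ p, ∑ q, |K p q|) ^ n := by
  induction n generalizing i j with
  | zero =>
    simp only [pow_zero, Matrix.one_apply]
    split_ifs <;> simp
  | succ n ih =>
    set S := ∑ p, ∑ q, |K p q| with hS
    have hS0 : 0 ≤ S := Finset.sum_nonneg fun _ _ => Finset.sum_nonneg fun _ _ => abs_nonneg _
    rw [pow_succ, Matrix.mul_apply]
    calc |∑ k, (K ^ n) i k * K k j| ≤ ∑ k, |(K ^ n) i k * K k j| :=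
          Finset.abs_sum_le_sum_abs _ _
      _ ≤ ∑ k, S ^ n * |K k j| := by
          refine Finset.sum_le_sum fun k _ => ?_
          rw [abs_mul]
          exact mul_le_mul_of_nonneg_right (ih i k) (abs_nonneg _)
      _ = S ^ n * ∑ k, |K k j| := by rw [Finset.mul_sum]
      _ ≤ S ^ n * S := by
          refine mul_le_mul_of_nonneg_left ?_ (pow_nonneg hS0 n)
          rw [hS]
          refine Finset.sum_le_sum fun p _ => ?_
          exact Finset.single_le_sum (f := fun q => |K p q|)
            (fun q _ => abs_nonneg _) (Finset.mem_univ j)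
      _ = S ^ (n + 1) := by rw [pow_succ]

lemma summable_entry (m : ℕ) (A : Matrix (Fin d) (Fin d) ℝ) (i j : Fin d) :
    Summable fun n : ℕ => (((n + m).factorial : ℝ))⁻¹ * (A ^ n) i j := by
  set S := ∑ p, ∑ q, |A p q|
  refine Summable.of_norm_bounded (Real.summable_pow_div_factorial S) fun n => ?_
  have h1 : (((n + m).factorial : ℝ))⁻¹ ≤ ((n.factorial : ℝ))⁻¹ := by
    apply inv_anti₀
    · exact_mod_cast n.factorial_pos
    · exact_mod_cast Nat.factorial_le (Nat.le_add_right n m)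
  have h2 := abs_entry_pow_le A n i j
  calc ‖(((n + m).factorial : ℝ))⁻¹ * (A ^ n) i j‖
      = (((n + m).factorial : ℝ))⁻¹ * |(A ^ n) i j| := by
        rw [Real.norm_eq_abs, abs_mul, abs_of_nonneg (by positivity)]
    _ ≤ ((n.factorial : ℝ))⁻¹ * S ^ n := by
        exact mul_le_mul h1 h2 (abs_nonneg _) (by positivity)
    _ = S ^ n / n.factorial := by ring

lemma summable_mat (m : ℕ) (A : Matrix (Fin d) (Fin d) ℝ) :
    Summable fun n : ℕ => (((n + m).factorial : ℝ))⁻¹ • A ^ n := by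
  refine Pi.summable.mpr ?_
  intro i
  refine Pi.summable.mpr ?_
  intro j
  simpa using summable_entry m A i j


lemma Gamma_entry (m : ℕ) (A : Matrix (Fin d) (Fin d) ℝ) (i j : Fin d) :
    Gamma m A i j = ∑' n : ℕ, (((n + m).factorial : ℝ))⁻¹ * (A ^ n) i j := by
  have h := summable_mat m A
  rw [Gamma]
  erw [tsum_apply h, tsum_apply ((Pi.summable.mp h) i)]
  rfl

lemma Gamma_entry_smul (m : ℕ) (K : Matrix (Fin d) (Fin d) ℝ) (t : ℝ) (i j : Fin d) :
    Gamma m (t • K) i j = ∑' n : ℕ, t ^ n * ((((n + m).factorial : ℝ))⁻¹ * (K ^ n) i j) := by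
  rw [Gamma_entry]
  refine tsum_congr fun n => ?_
  rw [smul_pow, Matrix.smul_apply, smul_eq_mul]
  ring

lemma Gamma_zero_eq_exp (A : Matrix (Fin d) (Fin d) ℝ) :
    Gamma 0 A = NormedSpace.exp A := by
  rw [NormedSpace.exp_eq_tsum ℝ, Gamma]
  exact tsum_congr fun n => by rw [Nat.add_zero]

lemma summable_entry_abs (m : ℕ) (A : Matrix (Fin d) (Fin d) ℝ) (i j : Fin d) :
    Summable fun n : ℕ => (((n + m).factorial : ℝ))⁻¹ * |(A ^ n) i j| := by
  set S := ∑ p, ∑ q, |A p q|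
  refine Summable.of_norm_bounded (Real.summable_pow_div_factorial S) fun n => ?_
  have h1 : (((n + m).factorial : ℝ))⁻¹ ≤ ((n.factorial : ℝ))⁻¹ := by
    apply inv_anti₀
    · exact_mod_cast n.factorial_pos
    · exact_mod_cast Nat.factorial_le (Nat.le_add_right n m)
  calc ‖(((n + m).factorial : ℝ))⁻¹ * |(A ^ n) i j|‖
      = (((n + m).factorial : ℝ))⁻¹ * |(A ^ n) i j| := by
        rw [Real.norm_eq_abs, abs_of_nonneg (by positivity)]
    _ ≤ ((n.factorial : ℝ))⁻¹ * S ^ n :=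
        mul_le_mul h1 (abs_entry_pow_le A n i j) (abs_nonneg _) (by positivity)
    _ = S ^ n / n.factorial := by ring

lemma key_integral (m : ℕ) (K : Matrix (Fin d) (Fin d) ℝ) {Δ : ℝ} (hΔ : 0 ≤ Δ) (i j : Fin d) :
    (∫ t in (0 : ℝ)..Δ, t ^ m * Gamma m (t • K) i j)
      = Δ ^ (m + 1) * Gamma (m + 1) (Δ • K) i j := by
  set c : ℕ → ℝ := fun n => (((n + m).factorial : ℝ))⁻¹ * (K ^ n) i j with hc
  set F : ℕ → ℝ → ℝ := fun n t => t ^ (n + m) * c n with hF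
  -- pointwise description of the integrand
  have hpt : ∀ t : ℝ, t ^ m * Gamma m (t • K) i j = ∑' n, F n t := by
    intro t
    rw [Gamma_entry_smul, ← tsum_mul_left]
    exact tsum_congr fun n => by simp only [hF, pow_add]; ring
  -- integrability
  have h_int : ∀ n : ℕ, Integrable (F n) (volume.restrict (Set.Ioc (0:ℝ) Δ)) := fun n =>
    ((continuous_pow (n + m)).mul continuous_const).integrableOn_Ioc
  -- summability of integrals of norms
  have h_sum : Summable fun n => ∫ t in Set.Ioc (0:ℝ) Δ, ‖F n t‖ := by
    have hb : ∀ n : ℕ, (∫ t in Set.Ioc (0:ℝ) Δ, ‖F n t‖) ≤ Δ * (Δ ^ (n + m) * |c n|) := by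
      intro n
      have hle : ∀ t ∈ Set.Ioc (0:ℝ) Δ, ‖F n t‖ ≤ Δ ^ (n + m) * |c n| := by
        intro t ht
        rw [hF, Real.norm_eq_abs, abs_mul, abs_pow]
        exact mul_le_mul_of_nonneg_right
          (pow_le_pow_left₀ (abs_nonneg t)
            (by rw [abs_of_nonneg ht.1.le]; exact ht.2) _) (abs_nonneg _)
      calc (∫ t in Set.Ioc (0:ℝ) Δ, ‖F n t‖)
          ≤ ∫ _ in Set.Ioc (0:ℝ) Δ, Δ ^ (n + m) * |c n| := by
            refine setIntegral_mono_on (h_int n).norm (integrableOn_const ?_)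
              measurableSet_Ioc hle
            simp [Real.volume_Ioc]
        _ = Δ * (Δ ^ (n + m) * |c n|) := by
            rw [setIntegral_const, Real.volume_real_Ioc_of_le hΔ, smul_eq_mul]
            ring
    refine Summable.of_nonneg_of_le
      (fun n => integral_nonneg fun t => norm_nonneg _) hb ?_
    have h1 : Summable fun n : ℕ => (((n + m).factorial : ℝ))⁻¹ * |((Δ • K) ^ n) i j| :=
      summable_entry_abs m (Δ • K) i j
    have h2 : Summable fun n : ℕ => Δ ^ (m+1) * ((((n + m).factorial : ℝ))⁻¹ * |((Δ • K) ^ n) i j|) :=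
      h1.mul_left _
    refine h2.congr fun n => ?_
    rw [smul_pow, Matrix.smul_apply, smul_eq_mul, abs_mul, abs_pow, abs_of_nonneg hΔ, hc,
      abs_mul, abs_of_nonneg (by positivity : (0:ℝ) ≤ (((n + m).factorial : ℝ))⁻¹), pow_add]
    ring
  -- swap integral and sum
  have hswap := integral_tsum_of_summable_integral_norm h_int h_sum
  have hIoc : (∫ t in (0 : ℝ)..Δ, t ^ m * Gamma m (t • K) i j)
      = ∫ t in Set.Ioc (0:ℝ) Δ, ∑' n, F n t := by
    rw [intervalIntegral.integral_of_le hΔ]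
    exact setIntegral_congr_fun measurableSet_Ioc fun t _ => hpt t
  rw [hIoc, ← hswap]
  -- compute each integral
  have hterm : ∀ n : ℕ, (∫ t in Set.Ioc (0:ℝ) Δ, F n t)
      = Δ ^ (m + 1) * (Δ ^ n * ((((n + (m+1)).factorial : ℝ))⁻¹ * (K ^ n) i j)) := by
    intro n
    rw [← intervalIntegral.integral_of_le hΔ]
    rw [hF]
    simp only
    rw [intervalIntegral.integral_mul_const, integral_pow]
    have hfac : ((n + (m + 1)).factorial : ℝ) = ((n + m : ℕ) + 1) * ((n + m).factorial : ℝ) := by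
      rw [show n + (m + 1) = (n + m) + 1 by ring, Nat.factorial_succ]
      push_cast; ring
    have hne1 : ((n + m : ℕ) : ℝ) + 1 ≠ 0 := by positivity
    have hne2 : ((n + m).factorial : ℝ) ≠ 0 := by
      exact_mod_cast (n + m).factorial_pos.ne'
    rw [hc, hfac]
    field_simp
    ring
  rw [tsum_congr hterm, tsum_mul_left, Gamma_entry_smul]


/-- `∫₀^Δ Γ₂(t K) t² dt = Γ₃(Δ K) Δ³` (entrywise integral); equivalently the iterated
integral `∫₀^Δ ∫₀^{t₃} ∫₀^{t₂} exp(t₁ K) dt₁ dt₂ dt₃ = Γ₃(Δ K) Δ³`. -/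
theorem integral_gamma_two_eq_gamma_three {d : ℕ} (hd : 0 < d)
    (K : Matrix (Fin d) (Fin d) ℝ) (Δ : ℝ) (hΔ : 0 < Δ) :
    (∀ i j : Fin d,
      (∫ t in (0 : ℝ)..Δ, ((t ^ 2) • Gamma 2 (t • K)) i j)
        = ((Δ ^ 3) • Gamma 3 (Δ • K)) i j) ∧
    (∀ i j : Fin d,
      (∫ t₃ in (0 : ℝ)..Δ, ∫ t₂ in (0 : ℝ)..t₃, ∫ t₁ in (0 : ℝ)..t₂,
          NormedSpace.exp (t₁ • K) i j)
        = ((Δ ^ 3) • Gamma 3 (Δ • K)) i j) := by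
  constructor
  · intro i j
    have h := key_integral 2 K hΔ.le i j
    simpa [Matrix.smul_apply, smul_eq_mul] using h
  · intro i j
    have inner : ∀ t₂ : ℝ, 0 ≤ t₂ →
        (∫ t₁ in (0:ℝ)..t₂, NormedSpace.exp (t₁ • K) i j)
          = t₂ ^ 1 * Gamma 1 (t₂ • K) i j := by
      intro t₂ h
      have := key_integral 0 K h i j
      simpa [Gamma_zero_eq_exp] using this
    have middle : ∀ t₃ : ℝ, 0 ≤ t₃ →
        (∫ t₂ in (0:ℝ)..t₃, ∫ t₁ in (0:ℝ)..t₂, NormedSpace.exp (t₁ • K) i j)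
          = t₃ ^ 2 * Gamma 2 (t₃ • K) i j := by
      intro t₃ h
      have hcongr : (∫ t₂ in (0:ℝ)..t₃, ∫ t₁ in (0:ℝ)..t₂, NormedSpace.exp (t₁ • K) i j)
          = ∫ t₂ in (0:ℝ)..t₃, t₂ ^ 1 * Gamma 1 (t₂ • K) i j := by
        apply intervalIntegral.integral_congr
        intro t₂ ht₂
        rw [Set.uIcc_of_le h] at ht₂
        exact inner t₂ ht₂.1
      rw [hcongr]
      exact key_integral 1 K h i j
    have houter : (∫ t₃ in (0:ℝ)..Δ, ∫ t₂ in (0:ℝ)..t₃, ∫ t₁ in (0:ℝ)..t₂,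
          NormedSpace.exp (t₁ • K) i j)
        = ∫ t₃ in (0:ℝ)..Δ, t₃ ^ 2 * Gamma 2 (t₃ • K) i j := by
      apply intervalIntegral.integral_congr
      intro t₃ ht₃
      rw [Set.uIcc_of_le hΔ.le] at ht₃
      exact middle t₃ ht₃.1
    rw [houter, key_integral 2 K hΔ.le i j, Matrix.smul_apply, smul_eq_mul]
end

section
/- Let n be a positive integer and let A, B be n×n real matrices. Define Φ : ℝ → n×n real matrices by Φ(t) = −exp(−t·A)·Γ₁(t·B)·t. Then Φ(0) = 0 and, for every t ∈ ℝ, Φ is differentiable at t with Φ'(t) = −A·Φ(t) − exp(−t·A)·exp(t·B). (This is the closed-form solution for the state transition matrix block Φ₁₄ satisfying the differential equation Φ̇₁₄ = −(ω_ie×)Φ₁₄ − C̃, with A = skew(ω_ie) and C̃(t) = exp(−tA)exp(tB).) -/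
open Matrix

attribute [local instance] Matrix.linftyOpNormedAddCommGroup Matrix.linftyOpNormedSpace
attribute [local instance] Matrix.linftyOpNormedRing Matrix.linftyOpNormedAlgebra

lemma psi_hasDerivAt {d : ℕ} (hd : 0 < d) (B : Matrix (Fin d) (Fin d) ℝ) (t : ℝ) :
    HasDerivAt (fun s : ℝ => ∑' n : ℕ,
      ((((n + 1).factorial : ℝ))⁻¹ * s ^ (n + 1)) • B ^ n)
      (NormedSpace.exp (t • B)) t := by
  have key : HasDerivAt (fun s : ℝ => ∑' n : ℕ,
      ((((n + 1).factorial : ℝ))⁻¹ * s ^ (n + 1)) • B ^ n)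
      (∑' n : ℕ, (((n.factorial : ℝ))⁻¹ * t ^ n) • B ^ n) t := by
    set R : ℝ := |t| + 1 with hR
    have hR0 : (0:ℝ) < R := by positivity
    refine hasDerivAt_tsum_of_isPreconnected
      (u := fun n : ℕ => (R * ‖B‖) ^ n / n.factorial)
      (g := fun n s => ((((n + 1).factorial : ℝ))⁻¹ * s ^ (n + 1)) • B ^ n)
      (g' := fun n s => (((n.factorial : ℝ))⁻¹ * s ^ n) • B ^ n)
      (Real.summable_pow_div_factorial _) (Metric.isOpen_ball (x := (0:ℝ)) (ε := R))
      ((convex_ball (0:ℝ) R).isPreconnected) (fun n y _ => ?_) (fun n y hy => ?_)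
      (y₀ := 0) (by simpa [Metric.mem_ball] using hR0) ?_ (by simp only [Metric.mem_ball, Real.dist_eq, sub_zero, hR]; exact lt_add_one _)
    · have h1 : HasDerivAt (fun s : ℝ => (((n + 1).factorial : ℝ))⁻¹ * s ^ (n + 1))
          ((((n + 1).factorial : ℝ))⁻¹ * ((n + 1 : ℕ) * y ^ n)) y := by
        simpa using (hasDerivAt_pow (n + 1) y).const_mul ((((n + 1).factorial : ℝ))⁻¹)
      have h2 := h1.smul_const (B ^ n)
      convert h2 using 2
      push_cast [Nat.factorial_succ]
      have hn : ((n.factorial : ℝ)) ≠ 0 := Nat.cast_ne_zero.mpr n.factorial_ne_zero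
      field_simp
    · have hyR : |y| ≤ R := by
        have : |y| < R := by simpa [Metric.mem_ball, Real.dist_eq] using hy
        simpa [Real.norm_eq_abs] using this.le
      have hBn : ‖B ^ n‖ ≤ ‖B‖ ^ n := by
        cases n with
        | zero =>
            haveI : Nonempty (Fin d) := Fin.pos_iff_nonempty.mp hd
            simp
        | succ m => exact norm_pow_le' B m.succ_pos
      calc ‖(((n.factorial : ℝ))⁻¹ * y ^ n) • B ^ n‖
          = |(((n.factorial : ℝ))⁻¹ * y ^ n)| * ‖B ^ n‖ := by
            rw [norm_smul, Real.norm_eq_abs]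
        _ ≤ (|y| ^ n / n.factorial) * ‖B‖ ^ n := by
            rw [abs_mul, abs_inv, Nat.abs_cast, abs_pow, div_eq_mul_inv, mul_comm ((n.factorial:ℝ))⁻¹]
            gcongr
        _ ≤ (R ^ n / n.factorial) * ‖B‖ ^ n := by gcongr
        _ = (R * ‖B‖) ^ n / n.factorial := by rw [mul_pow]; ring
    · simpa using (summable_zero : Summable fun _ : ℕ => (0 : Matrix (Fin d) (Fin d) ℝ))
  convert key using 1
  rw [NormedSpace.exp_eq_tsum (𝕂 := ℝ)]
  exact tsum_congr fun n => by rw [smul_pow, smul_smul]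

/-- The closed-form state transition block `Φ(t) = −exp(−t A) Γ₁(t B) t` satisfies
`Φ(0) = 0` and `Φ'(t) = −A Φ(t) − exp(−t A) exp(t B)`. -/
theorem phi14_closed_form {d : ℕ} (hd : 0 < d)
    (A B : Matrix (Fin d) (Fin d) ℝ)
    (Φ : ℝ → Matrix (Fin d) (Fin d) ℝ)
    (hΦ : ∀ t : ℝ, Φ t = -(t • (NormedSpace.exp (-(t • A)) * Gamma 1 (t • B)))) :
    Φ 0 = 0 ∧
      ∀ t : ℝ, HasDerivAt Φ
        (-(A * Φ t) - NormedSpace.exp (-(t • A)) * NormedSpace.exp (t • B)) t := by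
  have hψ : ∀ s : ℝ, s • Gamma 1 (s • B)
      = ∑' n : ℕ, ((((n + 1).factorial : ℝ))⁻¹ * s ^ (n + 1)) • B ^ n := by
    intro s
    unfold Gamma
    rw [← tsum_const_smul'' s]
    refine tsum_congr fun n => ?_
    rw [smul_pow, smul_smul, smul_smul]
    congr 1
    ring
  have hfun : ∀ s : ℝ, Φ s = -(NormedSpace.exp (s • (-A)) *
      (∑' n : ℕ, ((((n + 1).factorial : ℝ))⁻¹ * s ^ (n + 1)) • B ^ n)) := by
    intro s
    rw [hΦ s, ← mul_smul_comm, hψ s, smul_neg]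
  constructor
  · rw [hΦ 0]; simp
  · intro t
    have hE : HasDerivAt (fun s : ℝ => NormedSpace.exp (s • (-A)))
        ((-A) * NormedSpace.exp (t • (-A))) t := hasDerivAt_exp_smul_const' (-A) t
    have hP := psi_hasDerivAt hd B t
    have h := ((hE.mul hP).neg)
    have heq : (fun s : ℝ => -(NormedSpace.exp (s • (-A)) *
        (∑' n : ℕ, ((((n + 1).factorial : ℝ))⁻¹ * s ^ (n + 1)) • B ^ n))) = Φ := by
      funext s; rw [hfun s]
    rw [show (-((fun s : ℝ => NormedSpace.exp (s • (-A))) * fun s : ℝ => ∑' n : ℕ, ((((n + 1).factorial : ℝ))⁻¹ * s ^ (n + 1)) • B ^ n)) = Φ from heq] at h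
    refine h.congr_deriv ?_
    rw [hfun t]
    have hA : -(t • A) = t • (-A) := by rw [smul_neg]
    rw [hA]
    noncomm_ring
end
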